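/- arXiv:1203.5121 — 2 statements merged into one kernel-verified Lean document; each statement's English description precedes it below -/
import Mathlib

section
/- Let I be a set of indexes equipped with a well-founded strict order ≻, let →_α be a relation on a set A for each α ∈ I, and let ⊢⊣ be a symmetric relation on A. For J ⊆ I write →_J for the union ⋃_{α∈J} →_α, and for a single index α write ⋎α = {β ∈ I | β ≺ α}. Suppose that for all α, β ∈ I: (i) ←_α ∘ →_β ⊆ (→_{⋎α})* ∘ (→_β)= ∘ (→_{⋎α ∪ ⋎β})* ∘ ⊢⊣* ∘ (←_{⋎α ∪ ⋎β})* ∘ (←_α)= ∘ (←_{⋎β})*, and (ii) ⊢⊣ ∘ →_β ⊆ (→_β)= ∘ (→_{⋎β})* ∘ ⊢⊣* ∘ (←_{⋎β})*. Then →_I is Church-Rosser modulo ⊢⊣*. -/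
open Ordinal Relation

namespace CRMProof

/-! ### Steps and conversions -/

inductive DStep (I : Type*) where
  | fwd (α : I)
  | bwd (α : I)
  | eps

variable {A I : Type*}

inductive DConv (ar : I → A → A → Prop) (hd : A → A → Prop) :
    List (DStep I) → A → A → Prop
  | nil (a : A) : DConv ar hd [] a a
  | fwd {α : I} {a b c : A} {l : List (DStep I)} (h : ar α a b)
      (ht : DConv ar hd l b c) : DConv ar hd (DStep.fwd α :: l) a c
  | bwd {α : I} {a b c : A} {l : List (DStep I)} (h : ar α b a)
      (ht : DConv ar hd l b c) : DConv ar hd (DStep.bwd α :: l) a c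
  | eps {a b c : A} {l : List (DStep I)} (h : hd a b)
      (ht : DConv ar hd l b c) : DConv ar hd (DStep.eps :: l) a c

variable {ar : I → A → A → Prop} {hd : A → A → Prop}

theorem DConv.append {l₁ l₂ : List (DStep I)} {a b c : A}
    (h₁ : DConv ar hd l₁ a b) : DConv ar hd l₂ b c → DConv ar hd (l₁ ++ l₂) a c := by
  induction h₁ with
  | nil _ => exact fun h => h
  | fwd h _ ih => exact fun h₂ => DConv.fwd h (ih h₂)
  | bwd h _ ih => exact fun h₂ => DConv.bwd h (ih h₂)
  | eps h _ ih => exact fun h₂ => DConv.eps h (ih h₂)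

/-! ### Ordinal interpretation -/

noncomputable def sval (r : I → Ordinal) : DStep I → Ordinal → Ordinal
  | .fwd α, x => x + ω ^ ω ^ r α
  | .bwd α, x => ω ^ ω ^ r α * (x + 1)
  | .eps, x => x + 1

noncomputable def lval (r : I → Ordinal) (l : List (DStep I)) (x : Ordinal) : Ordinal :=
  l.foldr (sval r) x

@[simp] theorem lval_nil (r : I → Ordinal) (x : Ordinal) : lval r [] x = x := rfl

@[simp] theorem lval_cons (r : I → Ordinal) (s : DStep I) (l : List (DStep I)) (x : Ordinal) :
    lval r (s :: l) x = sval r s (lval r l x) := rfl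

theorem lval_append (r : I → Ordinal) (l₁ l₂ : List (DStep I)) (x : Ordinal) :
    lval r (l₁ ++ l₂) x = lval r l₁ (lval r l₂ x) :=
  List.foldr_append

theorem sval_mono (r : I → Ordinal) (s : DStep I) {x y : Ordinal} (h : x ≤ y) :
    sval r s x ≤ sval r s y := by
  cases s with
  | fwd α => exact add_le_add_left h _
  | bwd α => exact mul_le_mul_right (add_le_add_left h 1) _
  | eps => exact add_le_add_left h 1

theorem lval_mono (r : I → Ordinal) (l : List (DStep I)) {x y : Ordinal} (h : x ≤ y) :
    lval r l x ≤ lval r l y := by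
  induction l with
  | nil => exact h
  | cons s l ih => exact sval_mono r s ih

theorem lt_sval (r : I → Ordinal) (s : DStep I) (x : Ordinal) : x < sval r s x := by
  have h1 : ∀ c : Ordinal, 0 < c → x < x + c := by
    intro c hc
    conv_lhs => rw [← add_zero x]
    exact (add_lt_add_iff_left x).2 hc
  cases s with
  | fwd α => exact h1 _ (opow_pos _ omega0_pos)
  | bwd α =>
    refine lt_of_lt_of_le (h1 1 zero_lt_one) ?_
    exact Ordinal.le_mul_right _ (opow_pos _ omega0_pos)
  | eps => exact h1 1 zero_lt_one

theorem lt_lval_cons (r : I → Ordinal) (s : DStep I) (l : List (DStep I)) (x : Ordinal) :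
    lval r l x < lval r (s :: l) x := lt_sval r s _

/-! ### Ordinal helper lemmas -/

theorem one_lt_opow {c : Ordinal} (hc : 0 < c) : 1 < ω ^ c := by
  refine lt_of_lt_of_le one_lt_omega0 ?_
  conv_lhs => rw [← opow_one (ω : Ordinal)]
  exact opow_le_opow_right omega0_pos (Order.one_le_iff_pos.2 hc)

theorem lt_of_add_absorb {e c : Ordinal} (hc : 0 < c) (h : e + c = c) : e < c := by
  by_contra hlt
  push_neg at hlt
  have h1 : c + c ≤ e + c := add_le_add_left hlt c
  rw [h] at h1
  have h2 : c < c + c := by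
    conv_lhs => rw [← add_zero c]
    exact (add_lt_add_iff_left c).2 hc
  exact absurd h1 (not_le.2 h2)

/-- A step is "good" for level `c` : its exponent is absorbed by `c`. -/
def GoodStep (r : I → Ordinal) (c : Ordinal) : DStep I → Prop
  | .eps => True
  | .fwd γ => ω ^ r γ + c = c
  | .bwd γ => ω ^ r γ + c = c

/-- Main phase lemma: a list of good steps maps `ω^c*q + s` (with `s < ω^c`)
into `ω^c*q + s'` with `s' < ω^c`. -/
theorem phase {r : I → Ordinal} {c : Ordinal} (hc : 0 < c) {L : List (DStep I)}
    (hL : ∀ s ∈ L, GoodStep r c s) (q : Ordinal) :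
    ∀ v s, v ≤ ω ^ c * q + s → s < ω ^ c →
      ∃ s', s' < ω ^ c ∧ lval r L v ≤ ω ^ c * q + s' := by
  induction L with
  | nil => exact fun v s hv hs => ⟨s, hs, hv⟩
  | cons st L ih =>
    intro v s hv hs
    obtain ⟨s₁, hs₁, h₁⟩ := ih (fun x hx => hL x (List.mem_cons_of_mem _ hx)) v s hv hs
    have hst := hL st (List.mem_cons_self)
    have h1lt : (1 : Ordinal) < ω ^ c := one_lt_opow hc
    cases st with
    | eps =>
      refine ⟨s₁ + 1, principal_add_omega0_opow c hs₁ h1lt, ?_⟩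
      rw [lval_cons]
      show lval r L v + 1 ≤ _
      rw [← add_assoc]
      exact add_le_add_left h₁ 1
    | fwd γ =>
      have he : ω ^ r γ + c = c := hst
      have helt : ω ^ r γ < c := lt_of_add_absorb hc he
      have hlt : (ω : Ordinal) ^ ω ^ r γ < ω ^ c :=
        (opow_lt_opow_iff_right one_lt_omega0).2 helt
      refine ⟨s₁ + ω ^ ω ^ r γ, principal_add_omega0_opow c hs₁ hlt, ?_⟩
      rw [lval_cons]
      show lval r L v + _ ≤ _
      rw [← add_assoc]
      exact add_le_add_left h₁ _
    | bwd γ =>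
      have he : ω ^ r γ + c = c := hst
      have hs₁1 : s₁ + 1 < ω ^ c := principal_add_omega0_opow c hs₁ h1lt
      have key : (ω : Ordinal) ^ ω ^ r γ * (lval r L v + 1) ≤
          ω ^ c * q + ω ^ ω ^ r γ * (s₁ + 1) := by
        have h2 : lval r L v + 1 ≤ ω ^ c * q + (s₁ + 1) := by
          rw [← add_assoc]; exact add_le_add_left h₁ 1
        calc ω ^ ω ^ r γ * (lval r L v + 1)
            ≤ ω ^ ω ^ r γ * (ω ^ c * q + (s₁ + 1)) := mul_le_mul_right h2 _
          _ = ω ^ ω ^ r γ * (ω ^ c * q) + ω ^ ω ^ r γ * (s₁ + 1) := mul_add _ _ _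
          _ = ω ^ c * q + ω ^ ω ^ r γ * (s₁ + 1) := by
              rw [← mul_assoc, ← opow_add, he]
      refine ⟨ω ^ ω ^ r γ * (s₁ + 1), ?_, key⟩
      have : (ω : Ordinal) ^ ω ^ r γ * (s₁ + 1) < ω ^ ω ^ r γ * ω ^ c :=
        mul_lt_mul_of_pos_left hs₁1 (opow_pos _ omega0_pos)
      rwa [← opow_add, he] at this

variable {A I : Type*} {ar : I → A → A → Prop} {hd : A → A → Prop}

/-! ### More ordinal helpers -/

theorem absorb_mid {e x y : Ordinal} (h : e < ω ^ x ∨ e < ω ^ y) :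
    e + (ω ^ x + ω ^ y) = ω ^ x + ω ^ y := by
  rcases h with h | h
  · rw [← add_assoc, add_omega0_opow h]
  · rcases lt_or_ge e (ω ^ x) with h' | h'
    · rw [← add_assoc, add_omega0_opow h']
    · have hxy : (ω : Ordinal) ^ x < ω ^ y := lt_of_le_of_lt h' h
      rw [add_omega0_opow hxy, add_omega0_opow h]

theorem add_opow_le {x y t : Ordinal} (ht : t < ω ^ (x + y)) : t + ω ^ y ≤ ω ^ (x + y) := by
  rcases lt_or_eq_of_le (opow_le_opow_right omega0_pos (le_add_left (le_refl y) : y ≤ x + y)) with h | h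
  · exact le_of_lt (principal_add_omega0_opow _ ht h)
  · rw [← h] at ht ⊢
    exact le_of_eq (add_omega0_opow ht)

theorem good_of_below {r : I → Ordinal} {succ : I → I → Prop}
    (hr : ∀ α γ, succ α γ → r γ < r α) {α γ : I} (h : succ α γ) :
    ω ^ r γ + ω ^ r α = ω ^ r α :=
  add_omega0_opow ((opow_lt_opow_iff_right one_lt_omega0).2 (hr _ _ h))

/-! ### Extracting step lists from reflexive-transitive closures -/

theorem list_of_fwd_rtg {P : I → Prop} {u v : A}
    (h : ReflTransGen (fun x y => ∃ γ, P γ ∧ ar γ x y) u v) :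
    ∃ L, DConv ar hd L u v ∧ ∀ s ∈ L, ∃ γ, P γ ∧ s = DStep.fwd γ := by
  induction h with
  | refl => exact ⟨[], DConv.nil _, by simp⟩
  | tail _ hstep ih =>
    obtain ⟨L, hc, hm⟩ := ih
    obtain ⟨γ, hγ, har⟩ := hstep
    refine ⟨L ++ [DStep.fwd γ], hc.append (DConv.fwd har (DConv.nil _)), ?_⟩
    intro s hs
    rcases List.mem_append.1 hs with h | h
    · exact hm s h
    · simp only [List.mem_singleton] at h
      exact ⟨γ, hγ, h⟩

theorem list_of_bwd_rtg {P : I → Prop} {u v : A}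
    (h : ReflTransGen (fun x y => ∃ γ, P γ ∧ ar γ x y) u v) :
    ∃ L, DConv ar hd L v u ∧ ∀ s ∈ L, ∃ γ, P γ ∧ s = DStep.bwd γ := by
  induction h with
  | refl => exact ⟨[], DConv.nil _, by simp⟩
  | tail _ hstep ih =>
    obtain ⟨L, hc, hm⟩ := ih
    obtain ⟨γ, hγ, har⟩ := hstep
    refine ⟨DStep.bwd γ :: L, DConv.bwd har hc, ?_⟩
    intro s hs
    rcases List.mem_cons.1 hs with h | h
    · exact ⟨γ, hγ, h⟩
    · exact hm s h

theorem list_of_eps_rtg {u v : A} (h : ReflTransGen hd u v) :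
    ∃ L, DConv ar hd L u v ∧ ∀ s ∈ L, s = DStep.eps := by
  induction h with
  | refl => exact ⟨[], DConv.nil _, by simp⟩
  | tail _ hstep ih =>
    obtain ⟨L, hc, hm⟩ := ih
    refine ⟨L ++ [DStep.eps], hc.append (DConv.eps hstep (DConv.nil _)), ?_⟩
    intro s hs
    rcases List.mem_append.1 hs with h | h
    · exact hm s h
    · simpa using h

theorem list_of_eps_rtg_rev (hsym : ∀ a b, hd a b → hd b a) {u v : A}
    (h : ReflTransGen hd u v) :
    ∃ L, DConv ar hd L v u ∧ ∀ s ∈ L, s = DStep.eps := by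
  induction h with
  | refl => exact ⟨[], DConv.nil _, by simp⟩
  | tail _ hstep ih =>
    obtain ⟨L, hc, hm⟩ := ih
    refine ⟨DStep.eps :: L, DConv.eps (hsym _ _ hstep) hc, ?_⟩
    intro s hs
    rcases List.mem_cons.1 hs with h | h
    · exact h
    · exact hm s h

theorem list_of_fwd_refl {β : I} {u v : A} (h : ReflGen (ar β) u v) :
    ∃ L, DConv ar hd L u v ∧ (L = [] ∨ L = [DStep.fwd β]) := by
  cases h with
  | refl => exact ⟨[], DConv.nil _, Or.inl rfl⟩
  | single hh => exact ⟨[DStep.fwd β], DConv.fwd hh (DConv.nil _), Or.inr rfl⟩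

theorem list_of_bwd_refl {β : I} {u v : A} (h : ReflGen (ar β) u v) :
    ∃ L, DConv ar hd L v u ∧ (L = [] ∨ L = [DStep.bwd β]) := by
  cases h with
  | refl => exact ⟨[], DConv.nil _, Or.inl rfl⟩
  | single hh => exact ⟨[DStep.bwd β], DConv.bwd hh (DConv.nil _), Or.inr rfl⟩

end CRMProof
namespace CRMProof
variable {A I : Type*} {ar : I → A → A → Prop} {hd : A → A → Prop}

theorem lt_add_one_ord (M : Ordinal) : M < M + 1 := by
  conv_lhs => rw [← add_zero M]
  exact (add_lt_add_iff_left M).2 zero_lt_one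

theorem resolve_peak {succ : I → I → Prop} {r : I → Ordinal}
    (hr : ∀ α γ, succ α γ → r γ < r α)
    (hi : ∀ α β a b c, ar α b a → ar β b c →
      ∃ x1 x2 x3 x4 x5 x6,
        Relation.ReflTransGen (fun x y => ∃ γ, succ α γ ∧ ar γ x y) a x1 ∧
        Relation.ReflGen (ar β) x1 x2 ∧
        Relation.ReflTransGen
          (fun x y => ∃ γ, (succ α γ ∨ succ β γ) ∧ ar γ x y) x2 x3 ∧
        Relation.ReflTransGen hd x3 x4 ∧
        Relation.ReflTransGen
          (fun x y => ∃ γ, (succ α γ ∨ succ β γ) ∧ ar γ x y) x5 x4 ∧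
        Relation.ReflGen (ar α) x6 x5 ∧
        Relation.ReflTransGen (fun x y => ∃ γ, succ β γ ∧ ar γ x y) c x6)
    {α β : I} {p₀ p₁ p₂ : A} (hα : ar α p₁ p₀) (hβ : ar β p₁ p₂) :
    ∃ Z, DConv ar hd Z p₀ p₂ ∧
      ∀ x, lval r Z x < lval r [DStep.bwd α, DStep.fwd β] x := by
  obtain ⟨x1, x2, x3, x4, x5, x6, hc1, hc2, hc3, hc4, hc5, hc6, hc7⟩ :=
    hi α β p₀ p₁ p₂ hα hβ
  obtain ⟨L1, hL1c, hL1m⟩ := list_of_fwd_rtg (ar := ar) (hd := hd) hc1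
  obtain ⟨Lb, hLbc, hLbm⟩ := list_of_fwd_refl (ar := ar) (hd := hd) hc2
  obtain ⟨L2, hL2c, hL2m⟩ := list_of_fwd_rtg (ar := ar) (hd := hd) hc3
  obtain ⟨Le, hLec, hLem⟩ := list_of_eps_rtg (ar := ar) hc4
  obtain ⟨L3, hL3c, hL3m⟩ := list_of_bwd_rtg (ar := ar) (hd := hd) hc5
  obtain ⟨La, hLac, hLam⟩ := list_of_bwd_refl (ar := ar) (hd := hd) hc6
  obtain ⟨L4, hL4c, hL4m⟩ := list_of_bwd_rtg (ar := ar) (hd := hd) hc7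
  refine ⟨L1 ++ (Lb ++ (L2 ++ (Le ++ (L3 ++ (La ++ L4))))),
    hL1c.append (hLbc.append (hL2c.append (hLec.append
      (hL3c.append (hLac.append hL4c))))), ?_⟩
  intro x
  set cA := ω ^ r α with hcAdef
  set cB := ω ^ r β with hcBdef
  have hcA0 : (0:Ordinal) < cA := opow_pos _ omega0_pos
  have hcB0 : (0:Ordinal) < cB := opow_pos _ omega0_pos
  have hAB0 : (0:Ordinal) < cA + cB := lt_of_lt_of_le hcB0 (le_add_left (le_refl cB) : cB ≤ cA + cB)
  set q := x / ω ^ cB with hqdef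
  set ρ := x % ω ^ cB with hρdef
  have hx : ω ^ cB * q + ρ = x := Ordinal.div_add_mod x (ω ^ cB)
  have hρ : ρ < ω ^ cB := Ordinal.mod_lt x (opow_pos cB omega0_pos).ne'
  -- Stage 1 : L4
  have good4 : ∀ s ∈ L4, GoodStep r cB s := by
    intro s hs
    obtain ⟨γ, hγ, rfl⟩ := hL4m s hs
    exact good_of_below hr hγ
  obtain ⟨s1, hs1, hv1⟩ := phase hcB0 good4 q x ρ (le_of_eq hx.symm) hρ
  -- Stage 2 : La
  have stage2 : ∃ t, t < ω ^ (cA + cB) ∧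
      lval r La (lval r L4 x) ≤ ω ^ (cA + cB) * q + t := by
    have hBle : (ω:Ordinal) ^ cB ≤ ω ^ (cA + cB) :=
      opow_le_opow_right omega0_pos (le_add_left (le_refl cB) : cB ≤ cA + cB)
    rcases hLam with rfl | rfl
    · refine ⟨s1, lt_of_lt_of_le hs1 hBle, ?_⟩
      simp only [lval_nil]
      exact le_trans hv1 (add_le_add_left (mul_le_mul_left hBle q) s1)
    · have hs11 : s1 + 1 < ω ^ cB :=
        principal_add_omega0_opow cB hs1 (one_lt_opow hcB0)
      have h2 : lval r L4 x + 1 ≤ ω ^ cB * q + (s1 + 1) := by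
        rw [← add_assoc]; exact add_le_add_left hv1 1
      refine ⟨ω ^ cA * (s1 + 1), ?_, ?_⟩
      · have h3 : (ω:Ordinal) ^ cA * (s1 + 1) < ω ^ cA * ω ^ cB :=
          mul_lt_mul_of_pos_left hs11 (opow_pos _ omega0_pos)
        rwa [← opow_add] at h3
      · show ω ^ cA * (lval r L4 x + 1) ≤ _
        calc ω ^ cA * (lval r L4 x + 1)
            ≤ ω ^ cA * (ω ^ cB * q + (s1 + 1)) := mul_le_mul_right h2 _
          _ = ω ^ cA * (ω ^ cB * q) + ω ^ cA * (s1 + 1) := mul_add _ _ _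
          _ = ω ^ (cA + cB) * q + ω ^ cA * (s1 + 1) := by rw [← mul_assoc, ← opow_add]
  obtain ⟨t2, ht2, hv2⟩ := stage2
  -- Stages 3-5 : L3, Le, L2
  have goodmid : ∀ γ, (succ α γ ∨ succ β γ) → ω ^ r γ + (cA + cB) = cA + cB := by
    intro γ hγ
    refine absorb_mid ?_
    rcases hγ with h | h
    · exact Or.inl ((opow_lt_opow_iff_right one_lt_omega0).2 (hr _ _ h))
    · exact Or.inr ((opow_lt_opow_iff_right one_lt_omega0).2 (hr _ _ h))
  have good3 : ∀ s ∈ L3, GoodStep r (cA + cB) s := by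
    intro s hs
    obtain ⟨γ, hγ, rfl⟩ := hL3m s hs
    exact goodmid γ hγ
  have goodE : ∀ s ∈ Le, GoodStep r (cA + cB) s := by
    intro s hs
    rw [hLem s hs]; trivial
  have good2 : ∀ s ∈ L2, GoodStep r (cA + cB) s := by
    intro s hs
    obtain ⟨γ, hγ, rfl⟩ := hL2m s hs
    exact goodmid γ hγ
  obtain ⟨t3, ht3, hv3⟩ := phase hAB0 good3 q _ t2 hv2 ht2
  obtain ⟨t4, ht4, hv4⟩ := phase hAB0 goodE q _ t3 hv3 ht3
  obtain ⟨t5, ht5, hv5⟩ := phase hAB0 good2 q _ t4 hv4 ht4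
  -- Stage 6 : Lb
  have hW : (ω:Ordinal) ^ (cA + cB) * (q + 1) = ω ^ (cA + cB) * q + ω ^ (cA + cB) := by
    rw [mul_add, mul_one]
  have hv6 : lval r Lb (lval r L2 (lval r Le (lval r L3 (lval r La (lval r L4 x))))) ≤
      ω ^ (cA + cB) * (q + 1) := by
    rcases hLbm with rfl | rfl
    · simp only [lval_nil]
      refine le_trans hv5 ?_
      rw [hW]
      exact add_le_add_right (le_of_lt ht5) _
    · show lval r L2 (lval r Le (lval r L3 (lval r La (lval r L4 x)))) + ω ^ cB ≤ _
      refine le_trans (add_le_add_left hv5 _) ?_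
      rw [add_assoc, hW]
      exact add_le_add_right (add_opow_le ht5) _
  -- Stage 7 : L1
  have good1 : ∀ s ∈ L1, GoodStep r cA s := by
    intro s hs
    obtain ⟨γ, hγ, rfl⟩ := hL1m s hs
    exact good_of_below hr hγ
  have hv6' : lval r Lb (lval r L2 (lval r Le (lval r L3 (lval r La (lval r L4 x))))) ≤
      ω ^ cA * (ω ^ cB * (q + 1)) + 0 := by
    rw [add_zero, ← mul_assoc, ← opow_add]
    exact hv6
  obtain ⟨j, hj, hv7⟩ :=
    phase hcA0 good1 (ω ^ cB * (q + 1)) _ 0 hv6' (opow_pos cA omega0_pos)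
  -- Conclusion
  have hZval : lval r (L1 ++ (Lb ++ (L2 ++ (Le ++ (L3 ++ (La ++ L4)))))) x =
      lval r L1 (lval r Lb (lval r L2 (lval r Le (lval r L3 (lval r La (lval r L4 x)))))) := by
    simp only [lval_append]
  rw [hZval]
  have hRHS : lval r [DStep.bwd α, DStep.fwd β] x =
      ω ^ cA * (ω ^ cB * (q + 1)) + ω ^ cA := by
    show ω ^ cA * ((x + ω ^ cB) + 1) = _
    have hx2 : x + ω ^ cB = ω ^ cB * (q + 1) := by
      conv_lhs => rw [← hx]
      rw [add_assoc, add_omega0_opow hρ, mul_add, mul_one]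
    rw [hx2, mul_add, mul_one]
  rw [hRHS]
  exact lt_of_le_of_lt hv7 (add_lt_add_right hj _)

end CRMProof
namespace CRMProof
variable {A I : Type*} {ar : I → A → A → Prop} {hd : A → A → Prop}

theorem resolve_cliff_ef {succ : I → I → Prop} {r : I → Ordinal}
    (hr : ∀ α γ, succ α γ → r γ < r α)
    (hii : ∀ β a b c, hd a b → ar β b c →
      ∃ y1 y2 y3,
        Relation.ReflGen (ar β) a y1 ∧
        Relation.ReflTransGen (fun x y => ∃ γ, succ β γ ∧ ar γ x y) y1 y2 ∧
        Relation.ReflTransGen hd y2 y3 ∧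
        Relation.ReflTransGen (fun x y => ∃ γ, succ β γ ∧ ar γ x y) c y3)
    {β : I} {p₀ p₁ p₂ : A} (hh : hd p₀ p₁) (hβ : ar β p₁ p₂) :
    ∃ Z, DConv ar hd Z p₀ p₂ ∧
      ∀ x, lval r Z x < lval r [DStep.eps, DStep.fwd β] x := by
  obtain ⟨y1, y2, y3, hc1, hc2, hc3, hc4⟩ := hii β p₀ p₁ p₂ hh hβ
  obtain ⟨Lb, hLbc, hLbm⟩ := list_of_fwd_refl (ar := ar) (hd := hd) hc1
  obtain ⟨L2, hL2c, hL2m⟩ := list_of_fwd_rtg (ar := ar) (hd := hd) hc2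
  obtain ⟨Le, hLec, hLem⟩ := list_of_eps_rtg (ar := ar) hc3
  obtain ⟨L4, hL4c, hL4m⟩ := list_of_bwd_rtg (ar := ar) (hd := hd) hc4
  refine ⟨Lb ++ (L2 ++ (Le ++ L4)),
    hLbc.append (hL2c.append (hLec.append hL4c)), ?_⟩
  intro x
  set cB := ω ^ r β with hcBdef
  have hcB0 : (0:Ordinal) < cB := opow_pos _ omega0_pos
  set q := x / ω ^ cB with hqdef
  set ρ := x % ω ^ cB with hρdef
  have hx : ω ^ cB * q + ρ = x := Ordinal.div_add_mod x (ω ^ cB)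
  have hρ : ρ < ω ^ cB := Ordinal.mod_lt x (opow_pos cB omega0_pos).ne'
  have good4 : ∀ s ∈ L4, GoodStep r cB s := by
    intro s hs
    obtain ⟨γ, hγ, rfl⟩ := hL4m s hs
    exact good_of_below hr hγ
  have goodE : ∀ s ∈ Le, GoodStep r cB s := by
    intro s hs
    rw [hLem s hs]; trivial
  have good2 : ∀ s ∈ L2, GoodStep r cB s := by
    intro s hs
    obtain ⟨γ, hγ, rfl⟩ := hL2m s hs
    exact good_of_below hr hγ
  obtain ⟨s1, hs1, hv1⟩ := phase hcB0 good4 q x ρ (le_of_eq hx.symm) hρ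
  obtain ⟨s2, hs2, hv2⟩ := phase hcB0 goodE q _ s1 hv1 hs1
  obtain ⟨s3, hs3, hv3⟩ := phase hcB0 good2 q _ s2 hv2 hs2
  have hW : (ω:Ordinal) ^ cB * (q + 1) = ω ^ cB * q + ω ^ cB := by
    rw [mul_add, mul_one]
  have hv6 : lval r Lb (lval r L2 (lval r Le (lval r L4 x))) ≤ ω ^ cB * (q + 1) := by
    rcases hLbm with rfl | rfl
    · simp only [lval_nil]
      refine le_trans hv3 ?_
      rw [hW]
      exact add_le_add_right (le_of_lt hs3) _
    · show lval r L2 (lval r Le (lval r L4 x)) + ω ^ cB ≤ _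
      refine le_trans (add_le_add_left hv3 _) ?_
      rw [add_assoc, hW]
      exact add_le_add_right (le_of_eq (add_omega0_opow hs3)) _
  have hZval : lval r (Lb ++ (L2 ++ (Le ++ L4))) x =
      lval r Lb (lval r L2 (lval r Le (lval r L4 x))) := by
    simp only [lval_append]
  rw [hZval]
  have hRHS : lval r [DStep.eps, DStep.fwd β] x = ω ^ cB * (q + 1) + 1 := by
    show (x + ω ^ cB) + 1 = _
    have hx2 : x + ω ^ cB = ω ^ cB * (q + 1) := by
      conv_lhs => rw [← hx]
      rw [add_assoc, add_omega0_opow hρ, mul_add, mul_one]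
    rw [hx2]
  rw [hRHS]
  exact lt_of_le_of_lt hv6 (lt_add_one_ord _)

theorem resolve_cliff_be {succ : I → I → Prop} {r : I → Ordinal}
    (hr : ∀ α γ, succ α γ → r γ < r α)
    (hsym : ∀ a b, hd a b → hd b a)
    (hii : ∀ β a b c, hd a b → ar β b c →
      ∃ y1 y2 y3,
        Relation.ReflGen (ar β) a y1 ∧
        Relation.ReflTransGen (fun x y => ∃ γ, succ β γ ∧ ar γ x y) y1 y2 ∧
        Relation.ReflTransGen hd y2 y3 ∧
        Relation.ReflTransGen (fun x y => ∃ γ, succ β γ ∧ ar γ x y) c y3)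
    {α : I} {p₀ p₁ p₂ : A} (hα : ar α p₁ p₀) (hh : hd p₁ p₂) :
    ∃ Z, DConv ar hd Z p₀ p₂ ∧
      ∀ x, lval r Z x < lval r [DStep.bwd α, DStep.eps] x := by
  obtain ⟨y1, y2, y3, hc1, hc2, hc3, hc4⟩ := hii α p₂ p₁ p₀ (hsym _ _ hh) hα
  obtain ⟨La, hLac, hLam⟩ := list_of_bwd_refl (ar := ar) (hd := hd) hc1
  obtain ⟨L3, hL3c, hL3m⟩ := list_of_bwd_rtg (ar := ar) (hd := hd) hc2
  obtain ⟨Le, hLec, hLem⟩ := list_of_eps_rtg_rev (ar := ar) hsym hc3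
  obtain ⟨L1, hL1c, hL1m⟩ := list_of_fwd_rtg (ar := ar) (hd := hd) hc4
  refine ⟨L1 ++ (Le ++ (L3 ++ La)),
    hL1c.append (hLec.append (hL3c.append hLac)), ?_⟩
  intro x
  set cA := ω ^ r α with hcAdef
  have hcA0 : (0:Ordinal) < cA := opow_pos _ omega0_pos
  have goodE : ∀ s ∈ Le, GoodStep r cA s := by
    intro s hs
    rw [hLem s hs]; trivial
  have good3 : ∀ s ∈ L3, GoodStep r cA s := by
    intro s hs
    obtain ⟨γ, hγ, rfl⟩ := hL3m s hs
    exact good_of_below hr hγ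
  have good1 : ∀ s ∈ L1, GoodStep r cA s := by
    intro s hs
    obtain ⟨γ, hγ, rfl⟩ := hL1m s hs
    exact good_of_below hr hγ
  have hRHS : lval r [DStep.bwd α, DStep.eps] x = ω ^ cA * (x + 1) + ω ^ cA := by
    show ω ^ cA * ((x + 1) + 1) = _
    rw [mul_add, mul_one]
  have hZval : lval r (L1 ++ (Le ++ (L3 ++ La))) x =
      lval r L1 (lval r Le (lval r L3 (lval r La x))) := by
    simp only [lval_append]
  rw [hZval, hRHS]
  rcases hLam with rfl | rfl
  · -- La = []
    simp only [lval_nil]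
    set q₃ := x / ω ^ cA with hq3def
    set ρ₃ := x % ω ^ cA with hρ3def
    have hx : ω ^ cA * q₃ + ρ₃ = x := Ordinal.div_add_mod x (ω ^ cA)
    have hρ₃ : ρ₃ < ω ^ cA := Ordinal.mod_lt x (opow_pos cA omega0_pos).ne'
    obtain ⟨s1, hs1, hv1⟩ := phase hcA0 good3 q₃ x ρ₃ (le_of_eq hx.symm) hρ₃
    obtain ⟨s2, hs2, hv2⟩ := phase hcA0 goodE q₃ _ s1 hv1 hs1
    obtain ⟨j, hj, hv3⟩ := phase hcA0 good1 q₃ _ s2 hv2 hs2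
    have hq3x : q₃ ≤ x := by
      rw [Ordinal.div_le (opow_pos cA omega0_pos).ne']
      refine lt_of_lt_of_le (lt_add_one_ord x) ?_
      rw [Ordinal.add_one_eq_succ]
      exact Ordinal.le_mul_right _ (opow_pos cA omega0_pos)
    calc lval r L1 (lval r Le (lval r L3 x))
        ≤ ω ^ cA * q₃ + j := hv3
      _ < ω ^ cA * q₃ + ω ^ cA := add_lt_add_right hj _
      _ = ω ^ cA * (q₃ + 1) := by rw [mul_add, mul_one]
      _ ≤ ω ^ cA * (x + 1) := mul_le_mul_right (add_le_add_left hq3x 1) _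
      _ < ω ^ cA * (x + 1) + ω ^ cA := by
          conv_lhs => rw [← add_zero (ω ^ cA * (x + 1))]
          exact (add_lt_add_iff_left _).2 (opow_pos cA omega0_pos)
  · -- La = [DStep.bwd α]
    have hstart : lval r [DStep.bwd α] x ≤ ω ^ cA * (x + 1) + 0 := by
      rw [add_zero]
      show ω ^ cA * (x + 1) ≤ _
      exact le_refl _
    obtain ⟨s1, hs1, hv1⟩ := phase hcA0 good3 (x + 1) _ 0 hstart (opow_pos cA omega0_pos)
    obtain ⟨s2, hs2, hv2⟩ := phase hcA0 goodE (x + 1) _ s1 hv1 hs1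
    obtain ⟨j, hj, hv3⟩ := phase hcA0 good1 (x + 1) _ s2 hv2 hs2
    exact lt_of_le_of_lt hv3 (add_lt_add_right hj _)

end CRMProof
namespace CRMProof
variable {A I : Type*} {ar : I → A → A → Prop} {hd : A → A → Prop}

def AllFwd (L : List (DStep I)) : Prop := ∀ s ∈ L, ∃ γ, s = DStep.fwd γ
def AllEps (L : List (DStep I)) : Prop := ∀ s ∈ L, s = DStep.eps
def AllBwd (L : List (DStep I)) : Prop := ∀ s ∈ L, ∃ γ, s = DStep.bwd γ

def SortedL (l : List (DStep I)) : Prop :=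
  ∃ F E B, l = F ++ E ++ B ∧ AllFwd F ∧ AllEps E ∧ AllBwd B

theorem sortable {succ : I → I → Prop} {r : I → Ordinal}
    (hr : ∀ α γ, succ α γ → r γ < r α)
    (hsym : ∀ a b, hd a b → hd b a)
    (hi : ∀ α β a b c, ar α b a → ar β b c →
      ∃ x1 x2 x3 x4 x5 x6,
        Relation.ReflTransGen (fun x y => ∃ γ, succ α γ ∧ ar γ x y) a x1 ∧
        Relation.ReflGen (ar β) x1 x2 ∧
        Relation.ReflTransGen
          (fun x y => ∃ γ, (succ α γ ∨ succ β γ) ∧ ar γ x y) x2 x3 ∧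
        Relation.ReflTransGen hd x3 x4 ∧
        Relation.ReflTransGen
          (fun x y => ∃ γ, (succ α γ ∨ succ β γ) ∧ ar γ x y) x5 x4 ∧
        Relation.ReflGen (ar α) x6 x5 ∧
        Relation.ReflTransGen (fun x y => ∃ γ, succ β γ ∧ ar γ x y) c x6)
    (hii : ∀ β a b c, hd a b → ar β b c →
      ∃ y1 y2 y3,
        Relation.ReflGen (ar β) a y1 ∧
        Relation.ReflTransGen (fun x y => ∃ γ, succ β γ ∧ ar γ x y) y1 y2 ∧
        Relation.ReflTransGen hd y2 y3 ∧
        Relation.ReflTransGen (fun x y => ∃ γ, succ β γ ∧ ar γ x y) c y3)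
    (o : Ordinal) :
    ∀ (l : List (DStep I)) (a b : A), lval r l 0 = o → DConv ar hd l a b →
      ∃ l', SortedL l' ∧ DConv ar hd l' a b ∧ ∀ x, lval r l' x ≤ lval r l x := by
  induction o using Ordinal.induction with
  | h o IH =>
  intro l a b hlo hconv
  subst hlo
  cases l with
  | nil =>
    exact ⟨[], ⟨[], [], [], by simp, by simp [AllFwd], by simp [AllEps], by simp [AllBwd]⟩,
      hconv, fun x => le_refl _⟩
  | cons s l' =>
    cases s with
    | fwd γ =>
      cases hconv with
      | fwd hstep htail =>
        obtain ⟨l₁, hs₁, hc₁, hle₁⟩ :=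
          IH (lval r l' 0) (lt_lval_cons r _ l' 0) l' _ b rfl htail
        refine ⟨DStep.fwd γ :: l₁, ?_, DConv.fwd hstep hc₁, ?_⟩
        · obtain ⟨F, E, B, rfl, hF, hE, hB⟩ := hs₁
          refine ⟨DStep.fwd γ :: F, E, B, rfl, ?_, hE, hB⟩
          intro s hs
          rcases List.mem_cons.1 hs with rfl | hs
          · exact ⟨γ, rfl⟩
          · exact hF s hs
        · intro x
          simp only [lval_cons]
          exact sval_mono r _ (hle₁ x)
    | eps =>
      cases hconv with
      | eps hstep htail =>
        obtain ⟨l₁, hs₁, hc₁, hle₁⟩ :=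
          IH (lval r l' 0) (lt_lval_cons r _ l' 0) l' _ b rfl htail
        obtain ⟨F, E, B, rfl, hF, hE, hB⟩ := hs₁
        cases F with
        | nil =>
          refine ⟨DStep.eps :: ([] ++ E ++ B), ⟨[], DStep.eps :: E, B, by simp, ?_, ?_, hB⟩,
            DConv.eps hstep hc₁, ?_⟩
          · intro s hs; simp at hs
          · intro s hs
            rcases List.mem_cons.1 hs with rfl | hs
            · rfl
            · exact hE s hs
          · intro x
            simp only [lval_cons]
            exact sval_mono r _ (hle₁ x)
        | cons f F₂ =>
          obtain ⟨γf, rfl⟩ := hF f (List.mem_cons_self)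
          rw [List.cons_append, List.cons_append] at hc₁
          cases hc₁ with
          | fwd hstep2 htail2 =>
            obtain ⟨Z, hZc, hZlt⟩ := resolve_cliff_ef hr hii hstep hstep2
            have hrest := htail2
            have key : ∀ x, lval r (Z ++ (F₂ ++ E ++ B)) x < lval r (DStep.eps :: l') x := by
              intro x
              calc lval r (Z ++ (F₂ ++ E ++ B)) x
                  = lval r Z (lval r (F₂ ++ E ++ B) x) := lval_append _ _ _ _
                _ < lval r [DStep.eps, DStep.fwd γf] (lval r (F₂ ++ E ++ B) x) :=
                    hZlt _
                _ = sval r DStep.eps (lval r (DStep.fwd γf :: (F₂ ++ E ++ B)) x) := rfl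
                _ ≤ sval r DStep.eps (lval r l' x) := by
                    refine sval_mono r _ ?_
                    have := hle₁ x
                    rwa [List.cons_append, List.cons_append] at this
                _ = lval r (DStep.eps :: l') x := rfl
            obtain ⟨l₂, hs₂, hc₂, hle₂⟩ :=
              IH (lval r (Z ++ (F₂ ++ E ++ B)) 0) (key 0) _ _ b rfl (hZc.append htail2)
            refine ⟨l₂, hs₂, hc₂, ?_⟩
            intro x
            exact le_trans (hle₂ x) (le_of_lt (key x))
    | bwd α =>
      cases hconv with
      | bwd hstep htail =>
        obtain ⟨l₁, hs₁, hc₁, hle₁⟩ :=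
          IH (lval r l' 0) (lt_lval_cons r _ l' 0) l' _ b rfl htail
        obtain ⟨F, E, B, rfl, hF, hE, hB⟩ := hs₁
        cases F with
        | cons f F₂ =>
          obtain ⟨γf, rfl⟩ := hF f (List.mem_cons_self)
          rw [List.cons_append, List.cons_append] at hc₁
          cases hc₁ with
          | fwd hstep2 htail2 =>
            obtain ⟨Z, hZc, hZlt⟩ := resolve_peak hr hi hstep hstep2
            have key : ∀ x, lval r (Z ++ (F₂ ++ E ++ B)) x < lval r (DStep.bwd α :: l') x := by
              intro x
              calc lval r (Z ++ (F₂ ++ E ++ B)) x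
                  = lval r Z (lval r (F₂ ++ E ++ B) x) := lval_append _ _ _ _
                _ < lval r [DStep.bwd α, DStep.fwd γf] (lval r (F₂ ++ E ++ B) x) :=
                    hZlt _
                _ = sval r (DStep.bwd α) (lval r (DStep.fwd γf :: (F₂ ++ E ++ B)) x) := rfl
                _ ≤ sval r (DStep.bwd α) (lval r l' x) := by
                    refine sval_mono r _ ?_
                    have := hle₁ x
                    rwa [List.cons_append, List.cons_append] at this
                _ = lval r (DStep.bwd α :: l') x := rfl
            obtain ⟨l₂, hs₂, hc₂, hle₂⟩ :=
              IH (lval r (Z ++ (F₂ ++ E ++ B)) 0) (key 0) _ _ b rfl (hZc.append htail2)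
            refine ⟨l₂, hs₂, hc₂, ?_⟩
            intro x
            exact le_trans (hle₂ x) (le_of_lt (key x))
        | nil =>
          cases E with
          | cons e E₂ =>
            have he := hE e (List.mem_cons_self)
            subst he
            rw [List.nil_append, List.cons_append] at hc₁
            cases hc₁ with
            | eps hstep2 htail2 =>
              obtain ⟨Z, hZc, hZlt⟩ := resolve_cliff_be hr hsym hii hstep hstep2
              have key : ∀ x, lval r (Z ++ (E₂ ++ B)) x < lval r (DStep.bwd α :: l') x := by
                intro x
                calc lval r (Z ++ (E₂ ++ B)) x
                    = lval r Z (lval r (E₂ ++ B) x) := lval_append _ _ _ _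
                  _ < lval r [DStep.bwd α, DStep.eps] (lval r (E₂ ++ B) x) := hZlt _
                  _ = sval r (DStep.bwd α) (lval r (DStep.eps :: (E₂ ++ B)) x) := rfl
                  _ ≤ sval r (DStep.bwd α) (lval r l' x) := by
                      refine sval_mono r _ ?_
                      have := hle₁ x
                      rwa [List.nil_append, List.cons_append] at this
                  _ = lval r (DStep.bwd α :: l') x := rfl
              obtain ⟨l₂, hs₂, hc₂, hle₂⟩ :=
                IH (lval r (Z ++ (E₂ ++ B)) 0) (key 0) _ _ b rfl (hZc.append htail2)
              refine ⟨l₂, hs₂, hc₂, ?_⟩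
              intro x
              exact le_trans (hle₂ x) (le_of_lt (key x))
          | nil =>
            refine ⟨DStep.bwd α :: ([] ++ [] ++ B), ⟨[], [], DStep.bwd α :: B, by simp, ?_, ?_, ?_⟩,
              DConv.bwd hstep hc₁, ?_⟩
            · intro s hs; simp at hs
            · intro s hs; simp at hs
            · intro s hs
              rcases List.mem_cons.1 hs with rfl | hs
              · exact ⟨α, rfl⟩
              · exact hB s hs
            · intro x
              simp only [lval_cons]
              exact sval_mono r _ (hle₁ x)

end CRMProof
namespace CRMProof
variable {A I : Type*} {ar : I → A → A → Prop} {hd : A → A → Prop}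

theorem dconv_split {l₁ l₂ : List (DStep I)} {a c : A}
    (h : DConv ar hd (l₁ ++ l₂) a c) :
    ∃ b, DConv ar hd l₁ a b ∧ DConv ar hd l₂ b c := by
  induction l₁ generalizing a with
  | nil => exact ⟨a, DConv.nil _, h⟩
  | cons s l₁ ih =>
    rw [List.cons_append] at h
    cases s with
    | fwd γ =>
      cases h with
      | fwd hstep ht =>
        obtain ⟨b, h1, h2⟩ := ih ht
        exact ⟨b, DConv.fwd hstep h1, h2⟩
    | bwd γ =>
      cases h with
      | bwd hstep ht =>
        obtain ⟨b, h1, h2⟩ := ih ht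
        exact ⟨b, DConv.bwd hstep h1, h2⟩
    | eps =>
      cases h with
      | eps hstep ht =>
        obtain ⟨b, h1, h2⟩ := ih ht
        exact ⟨b, DConv.eps hstep h1, h2⟩

theorem conv_of_allfwd {L : List (DStep I)} {u v : A}
    (hc : DConv ar hd L u v) :
    AllFwd L → Relation.ReflTransGen (fun x y => ∃ α, ar α x y) u v := by
  induction hc with
  | nil _ => exact fun _ => Relation.ReflTransGen.refl
  | fwd h _ ih =>
    intro hL
    exact Relation.ReflTransGen.head ⟨_, h⟩ (ih fun s hs => hL s (List.mem_cons_of_mem _ hs))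
  | bwd h _ ih =>
    intro hL
    obtain ⟨γ, hγ⟩ := hL _ (List.mem_cons_self)
    exact absurd hγ (by simp)
  | eps h _ ih =>
    intro hL
    obtain ⟨γ, hγ⟩ := hL _ (List.mem_cons_self)
    exact absurd hγ (by simp)

theorem conv_of_alleps {L : List (DStep I)} {u v : A}
    (hc : DConv ar hd L u v) :
    AllEps L → Relation.ReflTransGen hd u v := by
  induction hc with
  | nil _ => exact fun _ => Relation.ReflTransGen.refl
  | eps h _ ih =>
    intro hL
    exact Relation.ReflTransGen.head h (ih fun s hs => hL s (List.mem_cons_of_mem _ hs))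
  | fwd h _ ih =>
    intro hL
    have := hL _ (List.mem_cons_self)
    exact absurd this (by simp)
  | bwd h _ ih =>
    intro hL
    have := hL _ (List.mem_cons_self)
    exact absurd this (by simp)

theorem conv_of_allbwd {L : List (DStep I)} {v b : A}
    (hc : DConv ar hd L v b) :
    AllBwd L → Relation.ReflTransGen (fun x y => ∃ α, ar α x y) b v := by
  induction hc with
  | nil _ => exact fun _ => Relation.ReflTransGen.refl
  | bwd h _ ih =>
    intro hL
    exact Relation.ReflTransGen.tail (ih fun s hs => hL s (List.mem_cons_of_mem _ hs)) ⟨_, h⟩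
  | fwd h _ ih =>
    intro hL
    obtain ⟨γ, hγ⟩ := hL _ (List.mem_cons_self)
    exact absurd hγ (by simp)
  | eps h _ ih =>
    intro hL
    obtain ⟨γ, hγ⟩ := hL _ (List.mem_cons_self)
    exact absurd hγ (by simp)

theorem list_of_conv {a b : A}
    (h : Relation.ReflTransGen
      (fun x y => (∃ α, ar α x y) ∨ (∃ α, ar α y x) ∨ hd x y) a b) :
    ∃ l, DConv ar hd l a b := by
  induction h with
  | refl => exact ⟨[], DConv.nil _⟩
  | tail _ hstep ih =>
    obtain ⟨l, hc⟩ := ih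
    rcases hstep with ⟨α, h⟩ | ⟨α, h⟩ | h
    · exact ⟨l ++ [DStep.fwd α], hc.append (DConv.fwd h (DConv.nil _))⟩
    · exact ⟨l ++ [DStep.bwd α], hc.append (DConv.bwd h (DConv.nil _))⟩
    · exact ⟨l ++ [DStep.eps], hc.append (DConv.eps h (DConv.nil _))⟩

end CRMProof

theorem crm_decreasing_diagrams' {A I : Type*} (succ : I → I → Prop)
    (ar : I → A → A → Prop) (hd : A → A → Prop)
    (hirrefl : ∀ α, ¬ succ α α)
    (htrans : ∀ α β γ, succ α β → succ β γ → succ α γ)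
    (hwf : ¬ ∃ f : ℕ → I, ∀ n, succ (f n) (f (n + 1)))
    (hsym : ∀ a b, hd a b → hd b a)
    (hi : ∀ α β a b c, ar α b a → ar β b c →
      ∃ x1 x2 x3 x4 x5 x6,
        Relation.ReflTransGen (fun x y => ∃ γ, succ α γ ∧ ar γ x y) a x1 ∧
        Relation.ReflGen (ar β) x1 x2 ∧
        Relation.ReflTransGen
          (fun x y => ∃ γ, (succ α γ ∨ succ β γ) ∧ ar γ x y) x2 x3 ∧
        Relation.ReflTransGen hd x3 x4 ∧
        Relation.ReflTransGen
          (fun x y => ∃ γ, (succ α γ ∨ succ β γ) ∧ ar γ x y) x5 x4 ∧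
        Relation.ReflGen (ar α) x6 x5 ∧
        Relation.ReflTransGen (fun x y => ∃ γ, succ β γ ∧ ar γ x y) c x6)
    (hii : ∀ β a b c, hd a b → ar β b c →
      ∃ y1 y2 y3,
        Relation.ReflGen (ar β) a y1 ∧
        Relation.ReflTransGen (fun x y => ∃ γ, succ β γ ∧ ar γ x y) y1 y2 ∧
        Relation.ReflTransGen hd y2 y3 ∧
        Relation.ReflTransGen (fun x y => ∃ γ, succ β γ ∧ ar γ x y) c y3) :
    ∀ a b, Relation.ReflTransGen (fun x y =>
        (∃ α, ar α x y) ∨ (∃ α, ar α y x) ∨ hd x y) a b →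
      ∃ u v, Relation.ReflTransGen (fun x y => ∃ α, ar α x y) a u ∧
        Relation.ReflTransGen hd u v ∧
        Relation.ReflTransGen (fun x y => ∃ α, ar α x y) b v := by
  intro a b hconv
  classical
  have hw : WellFounded (fun x y : I => succ y x) := by
    by_contra hnwf
    letI h1 : IsIrrefl I (fun x y : I => succ y x) := ⟨fun a h => hirrefl a h⟩
    letI h2 : IsTrans I (fun x y : I => succ y x) :=
      ⟨fun a b c hab hbc => htrans c b a hbc hab⟩
    letI h3 : IsStrictOrder I (fun x y : I => succ y x) := ⟨⟩
    rw [RelEmbedding.wellFounded_iff_isEmpty, not_isEmpty_iff] at hnwf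
    obtain ⟨f⟩ := hnwf
    exact hwf ⟨fun n => f n, fun n => f.map_rel_iff.2 (Nat.lt_succ_self n)⟩
  set r : I → Ordinal := fun x => (hw.apply x).rank with hrdef
  have hr : ∀ α γ, succ α γ → r γ < r α := fun α γ h =>
    Acc.rank_lt_of_rel (hw.apply α) h
  obtain ⟨l, hc⟩ := CRMProof.list_of_conv (ar := ar) (hd := hd) hconv
  obtain ⟨l', hs, hc', _⟩ :=
    CRMProof.sortable hr hsym hi hii (CRMProof.lval r l 0) l a b rfl hc
  obtain ⟨F, E, B, rfl, hF, hE, hB⟩ := hs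
  obtain ⟨v, hFE, hBc⟩ := CRMProof.dconv_split hc'
  obtain ⟨u, hFc, hEc⟩ := CRMProof.dconv_split hFE
  exact ⟨u, v, CRMProof.conv_of_allfwd hFc hF, CRMProof.conv_of_alleps hEc hE,
    CRMProof.conv_of_allbwd hBc hB⟩

/-- Proposition 2.16 (Theorem 14 of Ohlebusch 1998).
`succ α β` means `α ≻ β`; `ar α` is `→_α`; `hd` is the (unindexed) symmetric
relation `⊢⊣`; `⋎α = {γ | γ ≺ α}`. -/
theorem crm_decreasing_diagrams {A I : Type*} (succ : I → I → Prop)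
    (ar : I → A → A → Prop) (hd : A → A → Prop)
    (hirrefl : ∀ α, ¬ succ α α)
    (htrans : ∀ α β γ, succ α β → succ β γ → succ α γ)
    (hwf : ¬ ∃ f : ℕ → I, ∀ n, succ (f n) (f (n + 1)))
    (hsym : ∀ a b, hd a b → hd b a)
    (hi : ∀ α β a b c, ar α b a → ar β b c →
      ∃ x1 x2 x3 x4 x5 x6,
        Relation.ReflTransGen (fun x y => ∃ γ, succ α γ ∧ ar γ x y) a x1 ∧
        Relation.ReflGen (ar β) x1 x2 ∧
        Relation.ReflTransGen
          (fun x y => ∃ γ, (succ α γ ∨ succ β γ) ∧ ar γ x y) x2 x3 ∧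
        Relation.ReflTransGen hd x3 x4 ∧
        Relation.ReflTransGen
          (fun x y => ∃ γ, (succ α γ ∨ succ β γ) ∧ ar γ x y) x5 x4 ∧
        Relation.ReflGen (ar α) x6 x5 ∧
        Relation.ReflTransGen (fun x y => ∃ γ, succ β γ ∧ ar γ x y) c x6)
    (hii : ∀ β a b c, hd a b → ar β b c →
      ∃ y1 y2 y3,
        Relation.ReflGen (ar β) a y1 ∧
        Relation.ReflTransGen (fun x y => ∃ γ, succ β γ ∧ ar γ x y) y1 y2 ∧
        Relation.ReflTransGen hd y2 y3 ∧
        Relation.ReflTransGen (fun x y => ∃ γ, succ β γ ∧ ar γ x y) c y3) :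
    ∀ a b, Relation.ReflTransGen (fun x y =>
        (∃ α, ar α x y) ∨ (∃ α, ar α y x) ∨ hd x y) a b →
      ∃ u v, Relation.ReflTransGen (fun x y => ∃ α, ar α x y) a u ∧
        Relation.ReflTransGen hd u v ∧
        Relation.ReflTransGen (fun x y => ∃ α, ar α x y) b v :=
  crm_decreasing_diagrams' succ ar hd hirrefl htrans hwf hsym hi hii
end

section
/- Let →_S and →_P be relations on a set A such that →_P is reversible, i.e. a →_P b implies b (→_P)* a. If →_S is Church-Rosser modulo (↔_P)* (taking the symmetric relation ⊢⊣ to be ↔_P, the symmetric closure of →_P), then the union →_S ∪ →_P is confluent. -/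
/-- Lemma 3.4 (confluence by CRM and reversibility):
if `→_P` is reversible and `→_S` is Church-Rosser modulo `(↔_P)*`, then
`→_S ∪ →_P` is confluent. -/
theorem confluence_by_crm_and_reversibility {A : Type*} (S P : A → A → Prop)
    (hrev : ∀ a b, P a b → Relation.ReflTransGen P b a)
    (hcrm : ∀ a b, Relation.ReflTransGen
        (fun x y => S x y ∨ S y x ∨ (P x y ∨ P y x)) a b →
      ∃ u v, Relation.ReflTransGen S a u ∧
        Relation.ReflTransGen (fun x y => P x y ∨ P y x) u v ∧
        Relation.ReflTransGen S b v) :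
    ∀ a b c, Relation.ReflTransGen (fun x y => S x y ∨ P x y) a b →
      Relation.ReflTransGen (fun x y => S x y ∨ P x y) a c →
      ∃ d, Relation.ReflTransGen (fun x y => S x y ∨ P x y) b d ∧
        Relation.ReflTransGen (fun x y => S x y ∨ P x y) c d := by
  intro a b c hab hac
  set J : A → A → Prop := fun x y => S x y ∨ S y x ∨ (P x y ∨ P y x) with hJ
  have hJsymm : Symmetric J := by
    intro x y h; rcases h with h | h | h | h <;> simp [hJ, h]
  have hmono : ∀ {x y}, Relation.ReflTransGen (fun x y => S x y ∨ P x y) x y →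
      Relation.ReflTransGen J x y := fun h =>
    Relation.ReflTransGen.mono (r := fun x y => S x y ∨ P x y) (p := J) (by intro x y h; rcases h with h | h <;> simp [hJ, h]) _ _ h
  have hbc : Relation.ReflTransGen J b c :=
    Relation.ReflTransGen.trans ((@Relation.ReflTransGen.stdSymm _ _ ⟨fun _ _ h => hJsymm h⟩).symm _ _ (hmono hab))
      (hmono hac)
  have key : ∀ {x y}, Relation.ReflTransGen (fun x y => P x y ∨ P y x) x y →
      Relation.ReflTransGen (fun x y => S x y ∨ P x y) x y := by
    intro x y h
    induction h with
    | refl => exact Relation.ReflTransGen.refl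
    | tail _ hstep ih =>
      rcases hstep with h | h
      · exact ih.tail (Or.inr h)
      · exact ih.trans (Relation.ReflTransGen.mono (fun x y h => Or.inr h) _ _ (hrev _ _ h))
  obtain ⟨u, v, hbu, huv, hcv⟩ := hcrm b c hbc
  have huv' := key huv
  exact ⟨v, (Relation.ReflTransGen.mono (fun x y h => Or.inl h) _ _ hbu).trans huv',
    Relation.ReflTransGen.mono (fun x y h => Or.inl h) _ _ hcv⟩
end
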